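/- Under the preconditioner setup: λ_min( P̂^{-1/2} (A + μI) P̂^{-1/2} ) ≥ μ − ‖ℰ‖₂. -/

import Mathlib

open Matrix

/-- The spectral norm (largest singular value) of a real matrix,
as the `ℓ²→ℓ²` operator norm. -/
noncomputable def matSpectralNorm {m n : ℕ} (M : Matrix (Fin m) (Fin n) ℝ) : ℝ :=
  ‖LinearMap.toContinuousLinearMap (Matrix.toEuclideanLin M)‖

/-- The largest eigenvalue of a real symmetric matrix, as the supremum of the
Rayleigh quotient over the unit sphere. -/
noncomputable def lmax {n : ℕ} (M : Matrix (Fin n) (Fin n) ℝ) : ℝ :=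
  ⨆ x : Metric.sphere (0 : EuclideanSpace ℝ (Fin n)) 1,
    (inner ℝ (x : EuclideanSpace ℝ (Fin n))
      (Matrix.toEuclideanLin M (x : EuclideanSpace ℝ (Fin n))) : ℝ)

/-- The smallest eigenvalue of a real symmetric matrix, as the infimum of the
Rayleigh quotient over the unit sphere. -/
noncomputable def lmin {n : ℕ} (M : Matrix (Fin n) (Fin n) ℝ) : ℝ :=
  ⨅ x : Metric.sphere (0 : EuclideanSpace ℝ (Fin n)) 1,
    (inner ℝ (x : EuclideanSpace ℝ (Fin n))
      (Matrix.toEuclideanLin M (x : EuclideanSpace ℝ (Fin n))) : ℝ)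

open scoped ComplexOrder in
/-- The positive semidefinite square root of a positive semidefinite matrix
(the definition of `Matrix.PosSemidef.sqrt` from the older Mathlib, since removed). -/
noncomputable def Matrix.PosSemidef.sqrt {n 𝕜 : Type*} [Fintype n] [DecidableEq n] [RCLike 𝕜]
    {A : Matrix n n 𝕜} (hA : A.PosSemidef) : Matrix n n 𝕜 :=
  hA.1.eigenvectorUnitary.1 * diagonal ((↑) ∘ (√·) ∘ hA.1.eigenvalues) *
    (star hA.1.eigenvectorUnitary : Matrix n n 𝕜)

lemma psd_sqrt_mul_self {n : Type*} [Fintype n] [DecidableEq n]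
    {A : Matrix n n ℝ} (hA : A.PosSemidef) : hA.sqrt * hA.sqrt = A := by
  have hs := hA.1.spectral_theorem
  have hu : (star hA.1.eigenvectorUnitary : Matrix n n ℝ) * hA.1.eigenvectorUnitary.1 = 1 :=
    Unitary.coe_star_mul_self _
  have hd : diagonal (RCLike.ofReal ∘ (fun x => √x) ∘ hA.1.eigenvalues : n → ℝ) *
      diagonal (RCLike.ofReal ∘ (fun x => √x) ∘ hA.1.eigenvalues : n → ℝ)
      = diagonal (RCLike.ofReal ∘ hA.1.eigenvalues : n → ℝ) := by
    rw [diagonal_mul_diagonal]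
    congr 1; funext i
    simp [Real.mul_self_sqrt (hA.eigenvalues_nonneg i)]
  rw [Matrix.PosSemidef.sqrt]
  conv_rhs => rw [hs]
  rw [Unitary.conjStarAlgAut_apply]
  simp only [Matrix.mul_assoc]
  rw [← Matrix.mul_assoc (star _ : Matrix n n ℝ) (hA.1.eigenvectorUnitary.1), hu, Matrix.one_mul,
    ← Matrix.mul_assoc _ _ (star _ : Matrix n n ℝ), hd]

lemma psd_sqrt_herm {n : Type*} [Fintype n] [DecidableEq n]
    {A : Matrix n n ℝ} (hA : A.PosSemidef) : hA.sqrtᴴ = hA.sqrt := by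
  rw [Matrix.PosSemidef.sqrt]
  simp [Matrix.mul_assoc, Matrix.star_eq_conjTranspose]

set_option maxHeartbeats 2000000 in
/-- Preconditioner setup: `n > k ≥ 1`, `A` real symmetric with `A + μI` positive
definite (`μ ≥ 0`), `Û` with orthonormal columns (`ÛᵀÛ = I`),
`Θ̂ = diag(λ̂_1,…,λ̂_k)` with `λ̂_1 ≥ … ≥ λ̂_k > 0`, `Â_N = Û Θ̂ Ûᵀ`,
`A = Â_N + E + ℰ` with `E, ℰ` symmetric and `E` positive semidefinite, and
`P̂⁻¹ = I − ÛÛᵀ + (λ̂_k + μ) Û (Θ̂ + μI)⁻¹ Ûᵀ`, which is symmetric positive definite;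
`P̂^{-1/2}` is its positive semidefinite square root.
Then `λ_min(P̂^{-1/2}(A + μI)P̂^{-1/2}) ≥ μ − ‖ℰ‖₂`. -/
theorem stmt13 {n k : ℕ} (hk : 1 ≤ k) (hkn : k < n)
    (A : Matrix (Fin n) (Fin n) ℝ) (hA : A.IsHermitian)
    (μ : ℝ) (hμ : 0 ≤ μ) (hAμ : (A + μ • 1).PosDef)
    (U : Matrix (Fin n) (Fin k) ℝ) (hU : Uᵀ * U = 1)
    (lamh : Fin k → ℝ) (hlamh : Antitone lamh) (hlamhk : 0 < lamh ⟨k - 1, by omega⟩)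
    (E Err : Matrix (Fin n) (Fin n) ℝ) (hE : E.IsHermitian) (hErr : Err.IsHermitian)
    (hEpsd : E.PosSemidef)
    (hsum : A = U * Matrix.diagonal lamh * Uᵀ + E + Err)
    (hPinvPD : ((1 : Matrix (Fin n) (Fin n) ℝ) - U * Uᵀ +
      (lamh ⟨k - 1, by omega⟩ + μ) • (U * (Matrix.diagonal lamh + μ • 1)⁻¹ * Uᵀ)).PosDef)
     :
    let S := hPinvPD.posSemidef.sqrt
    let M := S * (A + μ • 1) * S
    μ - matSpectralNorm Err ≤ lmin M := by
  
  intro S M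
  -- notation
  have hkk : (⟨k - 1, by omega⟩ : Fin k) = ⟨k - 1, by omega⟩ := rfl
  set lk : ℝ := lamh ⟨k - 1, by omega⟩ with hlkdef
  have hlk : 0 < lk := hlamhk
  set a : ℝ := lk + μ with hadef
  have ha : 0 < a := by positivity
  have hi : ∀ i : Fin k, lk ≤ lamh i := by
    intro i
    exact hlamh (by simp [Fin.le_def]; omega)
  have hpos : ∀ i : Fin k, 0 < lamh i + μ := fun i => by have := hi i; linarith
  have hale : ∀ i : Fin k, a ≤ lamh i + μ := fun i => by have := hi i; simp [hadef]; linarith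
  set B : Matrix (Fin k) (Fin k) ℝ := Matrix.diagonal lamh + μ • 1 with hBdef
  have hB : B = Matrix.diagonal (fun i => lamh i + μ) := by
    rw [hBdef, Matrix.smul_one_eq_diagonal, Matrix.diagonal_add]
  have hBinv : B⁻¹ = Matrix.diagonal (fun i => (lamh i + μ)⁻¹) := by
    rw [hB]
    apply Matrix.inv_eq_right_inv
    rw [Matrix.diagonal_mul_diagonal]
    have h1 : (fun i => (lamh i + μ) * (lamh i + μ)⁻¹) = fun _ : Fin k => (1:ℝ) :=
      funext fun i => mul_inv_cancel₀ (hpos i).ne'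
    rw [h1, ← Matrix.diagonal_one]
  have hBBinv : B⁻¹ * B = 1 := by
    rw [hBinv, hB, Matrix.diagonal_mul_diagonal]
    have h1 : (fun i => (lamh i + μ)⁻¹ * (lamh i + μ)) = fun _ : Fin k => (1:ℝ) :=
      funext fun i => inv_mul_cancel₀ (hpos i).ne'
    rw [h1, ← Matrix.diagonal_one]
  set W : Matrix (Fin n) (Fin n) ℝ := U * Uᵀ with hWdef
  set V1 : Matrix (Fin n) (Fin n) ℝ := U * B⁻¹ * Uᵀ with hV1def
  set V2 : Matrix (Fin n) (Fin n) ℝ := U * B * Uᵀ with hV2def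
  set Pinv : Matrix (Fin n) (Fin n) ℝ := 1 - W + a • V1 with hPinvdef
  set P : Matrix (Fin n) (Fin n) ℝ := 1 - W + a⁻¹ • V2 with hPdef
  have hWW : W * W = W := by
    rw [hWdef, Matrix.mul_assoc, ← Matrix.mul_assoc Uᵀ, hU, Matrix.one_mul]
  have hWV2 : W * V2 = V2 := by
    rw [hWdef, hV2def, Matrix.mul_assoc U Uᵀ, ← Matrix.mul_assoc Uᵀ, ← Matrix.mul_assoc Uᵀ,
      hU, Matrix.one_mul, Matrix.mul_assoc]
  have hV1W : V1 * W = V1 := by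
    rw [hWdef, hV1def, Matrix.mul_assoc (U * B⁻¹), ← Matrix.mul_assoc Uᵀ, hU, Matrix.one_mul]
  have hV1V2 : V1 * V2 = W := by
    rw [hWdef, hV1def, hV2def]
    calc U * B⁻¹ * Uᵀ * (U * B * Uᵀ) = U * B⁻¹ * (Uᵀ * U) * (B * Uᵀ) := by
          simp only [Matrix.mul_assoc]
      _ = U * (B⁻¹ * B) * Uᵀ := by rw [hU, Matrix.mul_one]; simp only [Matrix.mul_assoc]
      _ = U * Uᵀ := by rw [hBBinv, Matrix.mul_one]
  have key : Pinv * P = 1 := by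
    rw [hPinvdef, hPdef]
    simp only [Matrix.add_mul, Matrix.mul_add, Matrix.sub_mul, Matrix.mul_sub,
      Matrix.one_mul, Matrix.mul_one, Matrix.smul_mul, Matrix.mul_smul,
      hWW, hWV2, hV1W, hV1V2, smul_sub, smul_add, smul_smul]
    rw [inv_mul_cancel₀ ha.ne', one_smul]
    abel
  have hPPinv : P * Pinv = 1 := mul_eq_one_comm.mp key
  have hSS : S * S = Pinv := psd_sqrt_mul_self hPinvPD.posSemidef
  have hSherm : Sᴴ = S := psd_sqrt_herm hPinvPD.posSemidef
  have hST : Sᵀ = S := by rw [← Matrix.conjTranspose_eq_transpose_of_trivial, hSherm]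
  have hSPinv : S * Pinv = Pinv * S := by rw [← hSS, Matrix.mul_assoc]
  have hSP : S * P = P * S := by
    calc S * P = (P * Pinv) * (S * P) := by rw [hPPinv, Matrix.one_mul]
      _ = P * (Pinv * S) * P := by simp only [Matrix.mul_assoc]
      _ = P * (S * Pinv) * P := by rw [hSPinv]
      _ = (P * S) * (Pinv * P) := by simp only [Matrix.mul_assoc]
      _ = P * S := by rw [key, Matrix.mul_one]
  have hSPS : S * P * S = 1 := by
    rw [hSP, Matrix.mul_assoc, hSS, hPPinv]
  set c : ℝ := lk * a⁻¹ with hcdef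
  have hc : 0 ≤ c := by positivity
  have hV2split : V2 = U * Matrix.diagonal lamh * Uᵀ + μ • W := by
    rw [hV2def, hBdef, hWdef]
    rw [Matrix.mul_add, Matrix.add_mul, Matrix.mul_smul, Matrix.mul_one, Matrix.smul_mul]
  have hdecomp : U * Matrix.diagonal lamh * Uᵀ + μ • (1 : Matrix (Fin n) (Fin n) ℝ)
      = c • V2 + μ • P := by
    rw [hPdef, hV2split]
    have h0 : lk + μ ≠ 0 := by positivity
    have hca : c + μ * a⁻¹ = 1 := by
      rw [hcdef, hadef]
      field_simp
    have h0' : μ + lk ≠ 0 := by positivity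
    have hainv : (μ + lk) * (μ + lk)⁻¹ = 1 := mul_inv_cancel₀ h0'
    match_scalars
    all_goals first
      | ring1
      | linear_combination (-(1+μ)) * hainv
      | linear_combination (-(2*μ)) * hainv
      | linear_combination (-μ) * hainv
      | linear_combination (-1) * hainv
  have hAsplit : A + μ • (1 : Matrix (Fin n) (Fin n) ℝ) = (c • V2 + μ • P) + E + Err := by
    rw [hsum, ← hdecomp]; abel
  have hMeq : M = μ • (1 : Matrix (Fin n) (Fin n) ℝ) + S * (c • V2) * S + S * E * S
      + S * Err * S := by
    show S * (A + μ • 1) * S = _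
    rw [hAsplit]
    have : S * (c • V2 + μ • P + E + Err) * S
        = S * (c • V2) * S + μ • (S * P * S) + S * E * S + S * Err * S := by
      simp only [Matrix.add_mul, Matrix.mul_add, Matrix.smul_mul, Matrix.mul_smul]
    rw [this, hSPS]
    abel
  -- positive semidefinite pieces
  have hQ1 : (S * (c • V2) * S).PosSemidef := by
    have hD : (Matrix.diagonal (fun i : Fin k => c * (lamh i + μ))).PosSemidef :=
      Matrix.PosSemidef.diagonal (fun i => mul_nonneg hc (hpos i).le)
    have h5 : S * (c • V2) * S
        = (S * U) * Matrix.diagonal (fun i : Fin k => c * (lamh i + μ)) * (S * U)ᴴ := by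
      rw [Matrix.conjTranspose_mul, Matrix.conjTranspose_eq_transpose_of_trivial, hSherm]
      rw [hV2def, hB]
      have hcd : (Matrix.diagonal (fun i : Fin k => c * (lamh i + μ)))
          = c • Matrix.diagonal (fun i : Fin k => lamh i + μ) := by
        rw [← Matrix.diagonal_smul]
        rfl
      rw [hcd]
      simp only [Matrix.smul_mul, Matrix.mul_smul, Matrix.mul_assoc]
    rw [h5]
    exact hD.mul_mul_conjTranspose_same (S * U)
  have hQ2 : (S * E * S).PosSemidef := by
    have h := hEpsd.mul_mul_conjTranspose_same S
    rwa [hSherm] at h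
  have hIP : ((1 : Matrix (Fin n) (Fin n) ℝ) - Pinv).PosSemidef := by
    have hD3 : (Matrix.diagonal (fun i : Fin k => 1 - a * (lamh i + μ)⁻¹)).PosSemidef := by
      apply Matrix.PosSemidef.diagonal
      intro i
      show (0:ℝ) ≤ 1 - a * (lamh i + μ)⁻¹
      rw [sub_nonneg]
      calc a * (lamh i + μ)⁻¹ ≤ (lamh i + μ) * (lamh i + μ)⁻¹ := by
            gcongr
            · exact (inv_nonneg.mpr (hpos i).le)
            · exact hale i
        _ = 1 := mul_inv_cancel₀ (hpos i).ne'
    have h6 : (1 : Matrix (Fin n) (Fin n) ℝ) - Pinv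
        = U * Matrix.diagonal (fun i : Fin k => 1 - a * (lamh i + μ)⁻¹) * Uᴴ := by
      rw [Matrix.conjTranspose_eq_transpose_of_trivial, hPinvdef, hV1def, hBinv]
      have hd : (Matrix.diagonal (fun i : Fin k => 1 - a * (lamh i + μ)⁻¹))
          = (1 : Matrix (Fin k) (Fin k) ℝ)
            - a • Matrix.diagonal (fun i : Fin k => (lamh i + μ)⁻¹) := by
        rw [← Matrix.diagonal_one, ← Matrix.diagonal_smul, Matrix.diagonal_sub]
        rfl
      rw [hd, Matrix.mul_sub, Matrix.sub_mul, Matrix.mul_one, Matrix.mul_smul,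
        Matrix.smul_mul, ← hWdef]
      abel
    rw [h6]
    exact hD3.mul_mul_conjTranspose_same U
  have quad : ∀ (Q : Matrix (Fin n) (Fin n) ℝ), Q.PosSemidef → ∀ v : Fin n → ℝ,
      0 ≤ v ⬝ᵥ (Q *ᵥ v) := fun Q hQ v => by simpa using hQ.dotProduct_mulVec_nonneg v
  have hvmS : ∀ (v u : Fin n → ℝ), v ⬝ᵥ (S *ᵥ u) = (S *ᵥ v) ⬝ᵥ u := by
    intro v u
    rw [Matrix.dotProduct_mulVec]
    nth_rewrite 1 [← hST]
    rw [Matrix.vecMul_transpose]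
  -- main estimate pointwise on the sphere
  haveI : Nonempty (Fin n) := ⟨⟨0, by omega⟩⟩
  haveI hne : Nonempty (Metric.sphere (0 : EuclideanSpace ℝ (Fin n)) 1) :=
    (NormedSpace.sphere_nonempty.mpr zero_le_one).to_subtype
  simp only [lmin]
  apply le_ciInf
  intro x
  set v : Fin n → ℝ := WithLp.equiv 2 (Fin n → ℝ) (x : EuclideanSpace ℝ (Fin n)) with hvdef
  have hinner : (inner ℝ (x : EuclideanSpace ℝ (Fin n))
      (Matrix.toEuclideanLin M (x : EuclideanSpace ℝ (Fin n))) : ℝ) = v ⬝ᵥ (M *ᵥ v) := by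
    rw [EuclideanSpace.inner_eq_star_dotProduct]
    simp [hvdef, dotProduct_comm]
  have hx1 : ‖(x : EuclideanSpace ℝ (Fin n))‖ = 1 := by
    have := x.2
    rwa [mem_sphere_zero_iff_norm] at this
  have hvv : v ⬝ᵥ v = 1 := by
    have h := real_inner_self_eq_norm_sq (x : EuclideanSpace ℝ (Fin n))
    rw [hx1] at h
    have h2 : (inner ℝ (x : EuclideanSpace ℝ (Fin n)) (x : EuclideanSpace ℝ (Fin n)) : ℝ)
        = v ⬝ᵥ v := by
      rw [EuclideanSpace.inner_eq_star_dotProduct]; simp [hvdef]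
    rw [h2] at h
    simpa using h
  set w : Fin n → ℝ := S *ᵥ v with hwdef
  have hPv : v ⬝ᵥ (Pinv *ᵥ v) = w ⬝ᵥ w := by
    rw [← hSS, ← Matrix.mulVec_mulVec, hvmS, hwdef]
  have hw1 : w ⬝ᵥ w ≤ 1 := by
    have h := quad _ hIP v
    rw [Matrix.sub_mulVec, dotProduct_sub, Matrix.one_mulVec, hvv, hPv] at h
    linarith
  have hww : 0 ≤ w ⬝ᵥ w := Finset.sum_nonneg fun i _ => mul_self_nonneg (w i)
  -- Err term
  set w' : EuclideanSpace ℝ (Fin n) := (WithLp.equiv 2 (Fin n → ℝ)).symm w with hw'def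
  have hinnerw : (inner ℝ w' (Matrix.toEuclideanLin Err w') : ℝ) = w ⬝ᵥ (Err *ᵥ w) := by
    change (Err *ᵥ w) ⬝ᵥ star w = _
    rw [star_trivial, dotProduct_comm]
  have hw'sq : ‖w'‖ ^ 2 = w ⬝ᵥ w := by
    have h := real_inner_self_eq_norm_sq w'
    change w ⬝ᵥ star w = ‖w'‖ ^ 2 at h
    simpa using h.symm
  have hw'le : ‖w'‖ ≤ 1 := by
    nlinarith [norm_nonneg w', hw1, hw'sq]
  have hop : ‖Matrix.toEuclideanLin Err w'‖ ≤ matSpectralNorm Err * ‖w'‖ :=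
    (LinearMap.toContinuousLinearMap (Matrix.toEuclideanLin Err)).le_opNorm w'
  have hsn : 0 ≤ matSpectralNorm Err := norm_nonneg _
  have habs := abs_real_inner_le_norm w' (Matrix.toEuclideanLin Err w')
  have hErrterm : -(matSpectralNorm Err) ≤ w ⬝ᵥ (Err *ᵥ w) := by
    rw [← hinnerw]
    have hsq : ‖w'‖ * ‖w'‖ ≤ 1 := by nlinarith [hw'le, norm_nonneg w']
    have h2 : |(inner ℝ w' (Matrix.toEuclideanLin Err w') : ℝ)| ≤ matSpectralNorm Err := by
      refine habs.trans ?_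
      calc ‖w'‖ * ‖Matrix.toEuclideanLin Err w'‖
          ≤ ‖w'‖ * (matSpectralNorm Err * ‖w'‖) := by
            have hnn : (0:ℝ) ≤ ‖w'‖ := norm_nonneg w'
            exact mul_le_mul_of_nonneg_left hop hnn
        _ = matSpectralNorm Err * (‖w'‖ * ‖w'‖) := by ring
        _ ≤ matSpectralNorm Err * 1 := mul_le_mul_of_nonneg_left hsq hsn
        _ = matSpectralNorm Err := mul_one _
    linarith [neg_abs_le (inner ℝ w' (Matrix.toEuclideanLin Err w') : ℝ)]
  have hwErr : v ⬝ᵥ ((S * Err * S) *ᵥ v) = w ⬝ᵥ (Err *ᵥ w) := by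
    rw [← Matrix.mulVec_mulVec, ← Matrix.mulVec_mulVec, hvmS, hwdef]
  -- combine
  rw [hinner, hMeq]
  simp only [Matrix.add_mulVec, dotProduct_add, Matrix.smul_mulVec,
    Matrix.one_mulVec, dotProduct_smul]
  have hq1 := quad _ hQ1 v
  have hq2 := quad _ hQ2 v
  rw [hwErr]
  rw [hvv]
  simp only [smul_eq_mul, mul_one]
  linarith [hErrterm]
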